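/- For every τ ∈ A₀ there exist an open set V ⊆ ℂ containing X and a constant C ≥ 1 such that for all z ∈ V and all b ∈ I_τ, C⁻¹·|b|⁻² ≤ |φ_b′(z)| ≤ C·|b|⁻², i.e. C⁻¹·|b|⁻² ≤ 1/|z + b|² ≤ C·|b|⁻². -/

import Mathlib

open Complex Metric Filter Set
open scoped ENNReal NNReal Topology

noncomputable section

/-- The parameter space `A₀ = {u+iv : u ≥ 0, v ≥ 1}`. -/
def A0 : Set ℂ := {τ : ℂ | 0 ≤ τ.re ∧ 1 ≤ τ.im}

/-- The phase space `X = {z : |z - 1/2| ≤ 1/2}`. -/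
def Xcl : Set ℂ := {z : ℂ | ‖z - 1/2‖ ≤ 1/2}

/-- The alphabet `I_τ = {m + nτ : m, n ∈ ℕ₊}`. -/
def Itau (τ : ℂ) : Set ℂ := {b : ℂ | ∃ m n : ℕ+, b = ((m : ℕ) : ℂ) + ((n : ℕ) : ℂ) * τ}

/-- The generator `φ_b(z) = 1/(z+b)`. -/
def phi (b z : ℂ) : ℂ := 1 / (z + b)


lemma stmt4_aux {x y a c : ℝ} (hx : 1 ≤ x) (hy : 1 ≤ y) (ha1 : -(1/2) < a)
    (ha2 : a < 3/2) (hc1 : -1 < c) (hc2 : c < 1) :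
    (a + x) ^ 2 + (c + y) ^ 2 ≤ 20 * (x ^ 2 + y ^ 2) ∧
      x ^ 2 + y ^ 2 ≤ 20 * ((a + x) ^ 2 + (c + y) ^ 2) := by
  constructor
  · nlinarith [sq_nonneg x, sq_nonneg y, sq_nonneg (a + x), sq_nonneg (c + y)]
  · rcases le_or_gt 2 y with h | h
    · nlinarith [sq_nonneg (a + x - x/2), sq_nonneg (c + y - y/2)]
    · nlinarith [sq_nonneg (c + y), sq_nonneg (a + x - x/2)]

/-- Two-sided estimate `C⁻¹|b|⁻² ≤ |φ_b'(z)| ≤ C|b|⁻²` on a neighborhood `V` of `X`. -/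
theorem stmt4 :
    ∀ τ ∈ A0, ∃ V : Set ℂ, IsOpen V ∧ Xcl ⊆ V ∧ ∃ C : ℝ, 1 ≤ C ∧
      ∀ z ∈ V, ∀ b ∈ Itau τ,
        C⁻¹ * (‖b‖ ^ 2)⁻¹ ≤ 1 / ‖z + b‖ ^ 2 ∧ 1 / ‖z + b‖ ^ 2 ≤ C * (‖b‖ ^ 2)⁻¹ := by
  rintro τ ⟨hre, him⟩
  refine ⟨Metric.ball (1/2 : ℂ) 1, Metric.isOpen_ball, ?_, 20, by norm_num, ?_⟩
  · intro z hz
    simp only [Metric.mem_ball, dist_eq_norm]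
    calc ‖z - 1/2‖ ≤ 1/2 := hz
    _ < 1 := by norm_num
  · intro z hz b hb
    obtain ⟨m, n, rfl⟩ := hb
    set b : ℂ := ((m : ℕ) : ℂ) + ((n : ℕ) : ℂ) * τ with hbdef
    -- real/imag bounds
    have hm1 : (1 : ℝ) ≤ (m : ℕ) := by exact_mod_cast m.one_le
    have hn1 : (1 : ℝ) ≤ (n : ℕ) := by exact_mod_cast n.one_le
    have hbre : b.re = (m : ℕ) + (n : ℕ) * τ.re := by simp [hbdef]
    have hbim : b.im = (n : ℕ) * τ.im := by simp [hbdef]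
    have hx : (1 : ℝ) ≤ b.re := by
      rw [hbre]
      nlinarith
    have hy : (1 : ℝ) ≤ b.im := by
      rw [hbim]
      nlinarith
    have hz' : ‖z - 1/2‖ < 1 := by
      simpa [Metric.mem_ball, dist_eq_norm] using hz
    have hzre : |z.re - 1/2| < 1 := by
      have := Complex.abs_re_le_norm (z - 1/2)
      simp only [Complex.sub_re] at this ⊢
      have h12 : ((1:ℂ)/2).re = 1/2 := by norm_num
      rw [h12] at this
      have hz'' : ‖z - 1/2‖ < 1 := by exact hz'
      linarith [this, hz'']
    have hzim : |z.im| < 1 := by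
      have := Complex.abs_im_le_norm (z - 1/2)
      simp only [Complex.sub_im] at this ⊢
      have h12 : ((1:ℂ)/2).im = 0 := by norm_num
      rw [h12] at this
      simp only [sub_zero] at this
      have hz'' : ‖z - 1/2‖ < 1 := by exact hz'
      linarith [this, hz'']
    have hzr1 : -(1/2 : ℝ) < z.re := by cases abs_lt.mp hzre; linarith
    have hzr2 : z.re < 3/2 := by cases abs_lt.mp hzre; linarith
    have hzi1 : -(1 : ℝ) < z.im := by cases abs_lt.mp hzim; linarith
    have hzi2 : z.im < 1 := by cases abs_lt.mp hzim; linarith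
    have hb2 : ‖b‖ ^ 2 = b.re ^ 2 + b.im ^ 2 := by
      rw [Complex.sq_norm, Complex.normSq_apply]; ring
    have hzb2 : ‖z + b‖ ^ 2 = (z.re + b.re) ^ 2 + (z.im + b.im) ^ 2 := by
      rw [Complex.sq_norm, Complex.normSq_apply]
      simp [Complex.add_re, Complex.add_im]; ring
    have hpb : (0 : ℝ) < ‖b‖ ^ 2 := by rw [hb2]; nlinarith
    have hpz : (0 : ℝ) < ‖z + b‖ ^ 2 := by rw [hzb2]; nlinarith
    obtain ⟨k1, k2⟩ := stmt4_aux hx hy hzr1 hzr2 hzi1 hzi2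
    have h1 : ‖z + b‖ ^ 2 ≤ 20 * ‖b‖ ^ 2 := by rw [hzb2, hb2]; exact k1
    have h2 : ‖b‖ ^ 2 ≤ 20 * ‖z + b‖ ^ 2 := by rw [hzb2, hb2]; exact k2
    constructor
    · rw [one_div]
      calc (20 : ℝ)⁻¹ * (‖b‖ ^ 2)⁻¹ = (20 * ‖b‖ ^ 2)⁻¹ := by rw [mul_inv]
      _ ≤ (‖z + b‖ ^ 2)⁻¹ := inv_anti₀ hpz h1
    · rw [one_div]
      calc (‖z + b‖ ^ 2)⁻¹ ≤ (20⁻¹ * ‖b‖ ^ 2)⁻¹ := by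
            apply inv_anti₀
            · positivity
            · linarith
      _ = 20 * (‖b‖ ^ 2)⁻¹ := by rw [mul_inv, inv_inv]
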